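/- Let μ₁ ≤ μ₂ ≤ ... ≤ μ_p be real numbers and Y₁,...,Y_p be random variables with E[Yᵢ] = μᵢ and Var(Yᵢ) ≤ σ². Let μ̃ = μ_m where m = argmin{Y₁,...,Y_p}. Then for any a > 0, P(μ̃ ≥ μ₁ + a) ≤ 4σ²p/a². -/

import Mathlib

open MeasureTheory ProbabilityTheory

private lemma var_sub_le {Ω : Type*} [MeasurableSpace Ω] (μ : Measure Ω)
    [IsProbabilityMeasure μ] {X Z : Ω → ℝ} (hX : MemLp X 2 μ) (hZ : MemLp Z 2 μ) :
    variance (X - Z) μ ≤ 2 * variance X μ + 2 * variance Z μ := by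
  have hXZ : MemLp (X - Z) 2 μ := hX.sub hZ
  rw [variance_eq_integral hXZ.aemeasurable, variance_eq_integral hX.aemeasurable,
    variance_eq_integral hZ.aemeasurable]
  have hEXZ : μ[X - Z] = μ[X] - μ[Z] := by
    have h : (X - Z) = fun x => X x - Z x := rfl
    rw [h]
    exact integral_sub (hX.integrable one_le_two) (hZ.integrable one_le_two)
  have hfX : Integrable (fun ω => (X ω - μ[X]) ^ 2) μ :=
    (hX.sub (memLp_const _)).integrable_sq
  have hfZ : Integrable (fun ω => (Z ω - μ[Z]) ^ 2) μ :=
    (hZ.sub (memLp_const _)).integrable_sq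
  have hfXZ : Integrable (fun ω => ((X ω - Z ω) - μ[X - Z]) ^ 2) μ := by
    have := (hXZ.sub (memLp_const (μ[X - Z]))).integrable_sq
    exact this
  have e1 : μ[(((X - Z) - fun _ => μ[X - Z] : Ω → ℝ)) ^ (2 : ℕ)]
      = ∫ ω, ((X ω - Z ω) - μ[X - Z]) ^ 2 ∂μ := rfl
  have e2 : μ[((X - fun _ => μ[X] : Ω → ℝ)) ^ (2 : ℕ)] = ∫ ω, (X ω - μ[X]) ^ 2 ∂μ := rfl
  have e3 : μ[((Z - fun _ => μ[Z] : Ω → ℝ)) ^ (2 : ℕ)] = ∫ ω, (Z ω - μ[Z]) ^ 2 ∂μ := rfl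
  calc ∫ ω, ((X ω - Z ω) - μ[X - Z]) ^ 2 ∂μ
      ≤ ∫ ω, (2 * (X ω - μ[X]) ^ 2 + 2 * (Z ω - μ[Z]) ^ 2) ∂μ := by
        apply integral_mono hfXZ ((hfX.const_mul 2).add (hfZ.const_mul 2))
        intro ω
        simp only [Pi.add_apply, hEXZ]
        nlinarith [sq_nonneg ((X ω - μ[X]) + (Z ω - μ[Z]))]
    _ = 2 * ∫ ω, (X ω - μ[X]) ^ 2 ∂μ + 2 * ∫ ω, (Z ω - μ[Z]) ^ 2 ∂μ := by
        rw [integral_add (hfX.const_mul 2) (hfZ.const_mul 2), integral_const_mul,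
          integral_const_mul]

theorem stmt_6 {Ω : Type*} [MeasurableSpace Ω] (μ : Measure Ω) [IsProbabilityMeasure μ]
    (p : ℕ) (hp : 0 < p) (μs : Fin p → ℝ) (Y : Fin p → Ω → ℝ) (σ a : ℝ) (ha : 0 < a)
    (hmono : Monotone μs)
    (hmeas : ∀ i, Measurable (Y i))
    (hL2 : ∀ i, MemLp (Y i) 2 μ)
    (hmean : ∀ i, ∫ ω, Y i ω ∂μ = μs i)
    (hvar : ∀ i, variance (Y i) μ ≤ σ ^ 2)
    (m : Ω → Fin p) (hmmeas : Measurable m)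
    (hargmin : ∀ ω i, Y (m ω) ω ≤ Y i ω) :
    (μ {ω | μs ⟨0, hp⟩ + a ≤ μs (m ω)}).toReal ≤ 4 * σ ^ 2 * p / a ^ 2 := by
  set i0 : Fin p := ⟨0, hp⟩
  have hσ : 0 ≤ σ ^ 2 := le_trans (variance_nonneg (Y i0) μ) (hvar i0)
  set G : Fin p → Set Ω := fun i =>
    {ω | a ≤ |(Y i0 - Y i) ω - μ[Y i0 - Y i]|} with hG
  -- the event is contained in the union of the G i
  have hsub : {ω | μs i0 + a ≤ μs (m ω)} ⊆ ⋃ i, G i := by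
    intro ω hω
    refine Set.mem_iUnion.2 ⟨m ω, ?_⟩
    have hint : ∫ x, (Y i0 x - Y (m ω) x) ∂μ = μs i0 - μs (m ω) := by
      rw [integral_sub ((hL2 i0).integrable one_le_two)
        ((hL2 (m ω)).integrable one_le_two), hmean, hmean]
    have h1 : Y (m ω) ω ≤ Y i0 ω := hargmin ω i0
    have hω' : μs i0 + a ≤ μs (m ω) := hω
    simp only [hG, Set.mem_setOf_eq, Pi.sub_apply]
    rw [hint, abs_of_nonneg (by linarith)]
    linarith
  -- Chebyshev bound on each G i
  have hGbound : ∀ i, μ (G i) ≤ ENNReal.ofReal (4 * σ ^ 2 / a ^ 2) := by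
    intro i
    have hcheb := meas_ge_le_variance_div_sq (μ := μ) ((hL2 i0).sub (hL2 i)) ha
    refine hcheb.trans (ENNReal.ofReal_le_ofReal ?_)
    have hv : variance (Y i0 - Y i) μ ≤ 4 * σ ^ 2 := by
      have := var_sub_le μ (hL2 i0) (hL2 i)
      have h1 := hvar i0
      have h2 := hvar i
      linarith
    exact div_le_div_of_nonneg_right hv (by positivity) |>.trans_eq rfl
  -- union bound
  have hmeasure : μ {ω | μs i0 + a ≤ μs (m ω)} ≤ p * ENNReal.ofReal (4 * σ ^ 2 / a ^ 2) := by
    calc μ {ω | μs i0 + a ≤ μs (m ω)} ≤ μ (⋃ i, G i) := measure_mono hsub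
      _ ≤ ∑' i, μ (G i) := measure_iUnion_le G
      _ = ∑ i, μ (G i) := tsum_fintype _
      _ ≤ ∑ _i : Fin p, ENNReal.ofReal (4 * σ ^ 2 / a ^ 2) :=
          Finset.sum_le_sum fun i _ => hGbound i
      _ = p * ENNReal.ofReal (4 * σ ^ 2 / a ^ 2) := by
          rw [Finset.sum_const, Finset.card_univ, Fintype.card_fin, nsmul_eq_mul]
  have hfin : (p : ENNReal) * ENNReal.ofReal (4 * σ ^ 2 / a ^ 2) ≠ ⊤ := by
    exact ENNReal.mul_ne_top (ENNReal.natCast_ne_top p) ENNReal.ofReal_ne_top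
  calc (μ {ω | μs i0 + a ≤ μs (m ω)}).toReal
      ≤ ((p : ENNReal) * ENNReal.ofReal (4 * σ ^ 2 / a ^ 2)).toReal :=
        ENNReal.toReal_mono hfin hmeasure
    _ = p * (4 * σ ^ 2 / a ^ 2) := by
        rw [ENNReal.toReal_mul, ENNReal.toReal_ofReal (by positivity)]
        simp
    _ = 4 * σ ^ 2 * p / a ^ 2 := by ring
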